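/- Replaceability for the PSub(k,p) lower bounds: let p ∈ {k+1,…,n} and let v : {1,…,k} → {1,…,n} be an arbitrary assignment of target outcome values. Then P(⋂_{j=1}^{k} {Y_j = v(j)} ∩ {X = p}) ≥ max{ 0, Σ_{j=1}^{k} [ P(Y_j = v(j)) + P(X = j) − P(X = j, Y = v(j)) ] + P(X = p) − k }. -/

import Mathlib

open MeasureTheory

theorem psub_kp_lower_bounds_replaceability
    {Ω : Type*} [MeasurableSpace Ω] (P : Measure Ω) [IsProbabilityMeasure P]
    (n k : ℕ) (hk1 : 1 ≤ k) (hkn : k ≤ n)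
    (X : Ω → ℕ) (Y : ℕ → Ω → ℕ) (Yobs : Ω → ℕ)
    (hX : Measurable X) (hY : ∀ j, Measurable (Y j))
    (hXr : ∀ ω, X ω ∈ Finset.Icc 1 n)
    (hYr : ∀ j ω, Y j ω ∈ Finset.Icc 1 n)
    (hcons : ∀ ω, Yobs ω = Y (X ω) ω)
    (p : ℕ) (hp : p ∈ Finset.Icc (k+1) n)
    (v : ℕ → ℕ) (hv : ∀ j ∈ Finset.Icc 1 k, v j ∈ Finset.Icc 1 n) :
    max 0
      ((∑ j ∈ Finset.Icc 1 k,
          ((P {ω | Y j ω = v j}).toReal + (P {ω | X ω = j}).toReal - (P {ω | X ω = j ∧ Yobs ω = v j}).toReal))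
        + (P {ω | X ω = p}).toReal - (k : ℝ)) ≤ (P ((⋂ j ∈ Finset.Icc 1 k, {ω | Y j ω = v j}) ∩ {ω | X ω = p})).toReal := by
  rw [Finset.mem_Icc] at hp
  set A : ℕ → Set Ω := fun j => {ω | Y j ω = v j} with hA
  set B : Set Ω := {ω | X ω = p} with hB
  set S : ℕ → Set Ω := fun j => A j ∪ {ω | X ω = j} with hS
  have hAm : ∀ j, MeasurableSet (A j) := fun j => (hY j) (measurableSet_singleton _)
  have hXm : ∀ j, MeasurableSet {ω | X ω = j} := fun j => hX (measurableSet_singleton _)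
  have hSm : ∀ j, MeasurableSet (S j) := fun j => (hAm j).union (hXm j)
  have hBm : MeasurableSet B := hXm p
  -- rewrite the intersection set
  have hset : ((⋂ j ∈ Finset.Icc 1 k, A j) ∩ B) = ((⋂ j ∈ Finset.Icc 1 k, S j) ∩ B) := by
    apply Set.eq_of_subset_of_subset
    · intro ω hω
      obtain ⟨h1, h2⟩ := hω
      refine ⟨?_, h2⟩
      simp only [Set.mem_iInter] at h1 ⊢
      intro j hj
      exact Or.inl (h1 j hj)
    · intro ω hω
      obtain ⟨h1, h2⟩ := hω
      refine ⟨?_, h2⟩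
      simp only [Set.mem_iInter] at h1 ⊢
      intro j hj
      rcases h1 j hj with h | h
      · exact h
      · exfalso
        simp only [Set.mem_setOf_eq] at h
        have h2' : X ω = p := h2
        rw [Finset.mem_Icc] at hj
        omega
  -- consistency: observed joint event equals counterfactual joint event
  have hcs : ∀ j, {ω | X ω = j ∧ Yobs ω = v j} = {ω | X ω = j} ∩ A j := by
    intro j
    ext ω
    simp only [Set.mem_setOf_eq, Set.mem_inter_iff, hcons ω, hA]
    constructor
    · rintro ⟨h1, h2⟩
      rw [h1] at h2
      exact ⟨h1, h2⟩
    · rintro ⟨h1, h2⟩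
      rw [h1]
      exact ⟨rfl, h2⟩
  -- term rewriting via inclusion-exclusion for two sets
  have hterm : ∀ j, (P (A j)).toReal + (P {ω | X ω = j}).toReal
      - (P {ω | X ω = j ∧ Yobs ω = v j}).toReal = (P (S j)).toReal := by
    intro j
    rw [hcs j]
    have h := measure_union_add_inter (μ := P) (A j) (hXm j)
    have ht1 : P (A j ∪ {ω | X ω = j}) ≠ ⊤ := measure_ne_top _ _
    have ht2 : P (A j ∩ {ω | X ω = j}) ≠ ⊤ := measure_ne_top _ _
    have h' := congrArg ENNReal.toReal h
    rw [ENNReal.toReal_add ht1 ht2, ENNReal.toReal_add (measure_ne_top _ _) (measure_ne_top _ _)] at h'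
    rw [Set.inter_comm]
    simp only [hS]
    linarith
  -- main Frechet-style bound
  set D : Set Ω := (⋂ j ∈ Finset.Icc 1 k, S j) ∩ B with hD
  have hDm : MeasurableSet D :=
    (Finset.measurableSet_biInter _ (fun j _ => hSm j)).inter hBm
  have hcompl : ∀ (E : Set Ω), MeasurableSet E → (P Eᶜ).toReal = 1 - (P E).toReal := by
    intro E hE
    rw [prob_compl_eq_one_sub hE, ENNReal.toReal_sub_of_le prob_le_one (by simp), ENNReal.toReal_one]
  have hunion : Dᶜ = (⋃ j ∈ Finset.Icc 1 k, (S j)ᶜ) ∪ Bᶜ := by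
    simp [hD, Set.compl_inter, Set.compl_iInter]
  have hle : P Dᶜ ≤ (∑ j ∈ Finset.Icc 1 k, P (S j)ᶜ) + P Bᶜ := by
    calc P Dᶜ ≤ P (⋃ j ∈ Finset.Icc 1 k, (S j)ᶜ) + P Bᶜ := by
          rw [hunion]; exact measure_union_le _ _
      _ ≤ (∑ j ∈ Finset.Icc 1 k, P (S j)ᶜ) + P Bᶜ :=
          add_le_add_left (measure_biUnion_finset_le _ _) _
  have hleR : (P Dᶜ).toReal ≤ (∑ j ∈ Finset.Icc 1 k, (P (S j)ᶜ).toReal) + (P Bᶜ).toReal := by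
    have hfin : (∑ j ∈ Finset.Icc 1 k, P (S j)ᶜ) + P Bᶜ ≠ ⊤ := by
      apply ENNReal.add_ne_top.mpr
      exact ⟨ENNReal.sum_ne_top.mpr (fun j _ => measure_ne_top _ _), measure_ne_top _ _⟩
    have := ENNReal.toReal_le_toReal (measure_ne_top _ _) hfin |>.mpr hle
    rwa [ENNReal.toReal_add (ENNReal.sum_ne_top.mpr (fun j _ => measure_ne_top _ _)) (measure_ne_top _ _),
      ENNReal.toReal_sum (fun j _ => measure_ne_top _ _)] at this
  rw [hcompl D hDm, hcompl B hBm] at hleR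
  have hsum : ∑ j ∈ Finset.Icc 1 k, (P (S j)ᶜ).toReal
      = (k : ℝ) - ∑ j ∈ Finset.Icc 1 k, (P (S j)).toReal := by
    rw [Finset.sum_congr rfl (fun j _ => hcompl (S j) (hSm j)), Finset.sum_sub_distrib]
    simp [Nat.card_Icc]
  rw [hsum] at hleR
  -- conclude
  rw [hset]
  apply max_le
  · exact ENNReal.toReal_nonneg
  · have hsum2 : ∑ j ∈ Finset.Icc 1 k,
        ((P (A j)).toReal + (P {ω | X ω = j}).toReal - (P {ω | X ω = j ∧ Yobs ω = v j}).toReal)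
        = ∑ j ∈ Finset.Icc 1 k, (P (S j)).toReal :=
      Finset.sum_congr rfl (fun j _ => hterm j)
    rw [hsum2]
    linarith
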